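/- Let K be an infinite compact Hausdorff space and let S be an infinite scattered compact Hausdorff space. Then C_w(K) and C_p(S) are not homeomorphic. -/

import Mathlib

set_option linter.unusedSectionVars false
set_option maxHeartbeats 1600000

/-- A topological space is scattered if every nonempty subset `S` contains a point
isolated in `S`. -/
def Scattered (X : Type*) [TopologicalSpace X] : Prop :=
  ∀ S : Set X, S.Nonempty → ∃ x ∈ S, ∃ U : Set X, IsOpen U ∧ U ∩ S = {x}

/-- The weak topology on `C(K, ℝ)`: the coarsest topology making all continuous linear
functionals on the Banach space `C(K)` continuous. -/
noncomputable def weakTopology (K : Type*) [TopologicalSpace K] [CompactSpace K] :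
    TopologicalSpace C(K, ℝ) :=
  ⨅ μ : C(K, ℝ) →L[ℝ] ℝ, TopologicalSpace.induced μ inferInstance

/-- The topology of pointwise convergence on `C(K, ℝ)`. -/
noncomputable def pointwiseTopology (K : Type*) [TopologicalSpace K] :
    TopologicalSpace C(K, ℝ) :=
  TopologicalSpace.induced (fun f : C(K, ℝ) => (f : K → ℝ)) Pi.topologicalSpace

open Filter Topology Set


section Bumps
variable (K : Type*) [TopologicalSpace K] [CompactSpace K] [T2Space K] [Infinite K]

lemma exists_nonisolated :
    ∃ x : K, ∀ V : Set K, IsOpen V → x ∈ V → ∃ y ∈ V, y ≠ x := by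
  by_contra h
  push_neg at h
  have hsing : ∀ x : K, IsOpen ({x} : Set K) := by
    intro x
    obtain ⟨V, hV, hxV, hy⟩ := h x
    have : V = {x} := by
      apply subset_antisymm
      · intro y hyV; exact hy y hyV
      · intro y hy'; simp only [mem_singleton_iff] at hy'; subst hy'; exact hxV
    rw [← this]; exact hV
  haveI : DiscreteTopology K := discreteTopology_iff_isOpen_singleton.mpr hsing
  exact @not_finite K inferInstance finite_of_compact_of_discrete

lemma exists_disjoint_opens :
    ∃ (O : ℕ → Set K) (y : ℕ → K),
      (∀ n, IsOpen (O n)) ∧ (∀ n, y n ∈ O n) ∧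
      ∀ m n, m ≠ n → Disjoint (O m) (O n) := by
  obtain ⟨x, hx⟩ := exists_nonisolated K
  have stepT : ∀ V : {V : Set K // IsOpen V ∧ x ∈ V},
      ∃ p : K × Set K × {V : Set K // IsOpen V ∧ x ∈ V},
        IsOpen p.2.1 ∧ p.1 ∈ p.2.1 ∧ p.2.1 ⊆ V.1 ∧ p.2.2.1 ⊆ V.1 ∧
          Disjoint p.2.1 p.2.2.1 := by
    rintro ⟨V, hV, hxV⟩
    obtain ⟨y, hyV, hyx⟩ := hx V hV hxV
    obtain ⟨W0, V0, hW0, hV0, hyW0, hxV0, hdis⟩ := t2_separation hyx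
    exact ⟨⟨y, W0 ∩ V, ⟨V0 ∩ V, (hV0.inter hV), ⟨hxV0, hxV⟩⟩⟩, hW0.inter hV,
      ⟨hyW0, hyV⟩, inter_subset_right, inter_subset_right,
      hdis.mono inter_subset_left inter_subset_left⟩
  choose next hn1 hn2 hn3 hn4 hn5 using stepT
  let Vseq : ℕ → {V : Set K // IsOpen V ∧ x ∈ V} := fun n =>
    Nat.rec ⟨univ, isOpen_univ, mem_univ x⟩ (fun _ V => (next V).2.2) n
  have hVsucc : ∀ n, Vseq (n + 1) = (next (Vseq n)).2.2 := fun n => rfl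
  have hmono : ∀ n m, n ≤ m → (Vseq m).1 ⊆ (Vseq n).1 := by
    intro n m h
    induction h with
    | refl => exact Subset.rfl
    | step h ih => exact (hn4 _).trans ih
  refine ⟨fun n => (next (Vseq n)).2.1, fun n => (next (Vseq n)).1,
    fun n => hn1 _, fun n => hn2 _, ?_⟩
  have key : ∀ m n, m < n → Disjoint ((next (Vseq m)).2.1) ((next (Vseq n)).2.1) := by
    intro m n hmn
    have h1 : (next (Vseq n)).2.1 ⊆ (Vseq (m + 1)).1 := by
      refine (hn3 (Vseq n)).trans (hmono _ _ hmn)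
    rw [hVsucc m] at h1
    exact (hn5 (Vseq m)).mono_right h1
  intro m n hmn
  rcases lt_or_gt_of_ne hmn with h | h
  · exact key m n h
  · exact (key n m h).symm

lemma exists_bumps :
    ∃ (f : ℕ → C(K, ℝ)) (y : ℕ → K) (O : ℕ → Set K),
      (∀ n, IsOpen (O n)) ∧ (∀ n, y n ∈ O n) ∧
      (∀ m n, m ≠ n → Disjoint (O m) (O n)) ∧
      (∀ n, f n (y n) = 1) ∧ (∀ n x, 0 ≤ f n x ∧ f n x ≤ 1) ∧
      (∀ n x, x ∉ O n → f n x = 0) := by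
  obtain ⟨O, y, hO, hyO, hd⟩ := exists_disjoint_opens K
  have hex : ∀ n, ∃ f : C(K, ℝ), EqOn f 0 (O n)ᶜ ∧ EqOn f 1 {y n} ∧
      ∀ x, f x ∈ Icc (0 : ℝ) 1 := by
    intro n
    exact exists_continuous_zero_one_of_isClosed (hO n).isClosed_compl
      isClosed_singleton
      (disjoint_singleton_right.mpr (by simp [hyO n]))
  choose f h0 h1 h01 using hex
  exact ⟨f, y, O, hO, hyO, hd, fun n => h1 n rfl,
    fun n x => ⟨(h01 n x).1, (h01 n x).2⟩, fun n x hx => h0 n hx⟩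

end Bumps


section WeakNull
variable {K : Type*} [TopologicalSpace K] [CompactSpace K]

lemma mu_tendsto_zero (f : ℕ → C(K, ℝ)) (O : ℕ → Set K)
    (hd : ∀ m n, m ≠ n → Disjoint (O m) (O n))
    (h01 : ∀ n x, 0 ≤ f n x ∧ f n x ≤ 1)
    (hsupp : ∀ n x, x ∉ O n → f n x = 0)
    (μ : C(K, ℝ) →L[ℝ] ℝ) :
    Tendsto (fun n => μ (f n)) atTop (𝓝 0) := by
  have key : ∀ I : Finset ℕ, ∑ i ∈ I, |μ (f i)| ≤ ‖μ‖ := by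
    intro I
    set ε : ℕ → ℝ := fun i => if μ (f i) < 0 then -1 else 1 with hε
    set g : C(K, ℝ) := ∑ i ∈ I, ε i • f i with hg
    have hgx : ∀ x : K, ‖g x‖ ≤ 1 := by
      intro x
      have hgx' : g x = ∑ i ∈ I, ε i * f i x := by
        rw [hg]
        simp [ContinuousMap.sum_apply]
    
      rw [hgx', Real.norm_eq_abs]
      by_cases hx : ∃ i ∈ I, x ∈ O i
      · obtain ⟨i₀, hi₀I, hi₀⟩ := hx
        have hsum : ∑ i ∈ I, ε i * f i x = ε i₀ * f i₀ x := by
          refine Finset.sum_eq_single_of_mem i₀ hi₀I (fun j _ hji => ?_)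
          have hfj : f j x = 0 :=
            hsupp j x (fun hxj => Set.disjoint_left.mp (hd j i₀ hji) hxj hi₀)
          rw [hfj, mul_zero]
        rw [hsum, abs_mul]
        have hsmall : |ε i₀| = 1 := by
          rw [hε]; by_cases h : μ (f i₀) < 0 <;> simp [h]
        rw [hsmall]
        rw [one_mul, abs_of_nonneg (h01 i₀ x).1]
        exact (h01 i₀ x).2
      · push_neg at hx
        have hsum : ∑ i ∈ I, ε i * f i x = 0 := by
          refine Finset.sum_eq_zero fun j hj => ?_
          rw [hsupp j x (hx j hj), mul_zero]
        rw [hsum]; simp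
    have hgnorm : ‖g‖ ≤ 1 := (ContinuousMap.norm_le _ zero_le_one).mpr hgx
    have hμg : μ g = ∑ i ∈ I, |μ (f i)| := by
      rw [hg, map_sum]
      refine Finset.sum_congr rfl fun i _ => ?_
      rw [map_smul, smul_eq_mul, hε]
      by_cases h : μ (f i) < 0
      · simp [h, abs_of_neg h]
      · simp [h, abs_of_nonneg (not_lt.mp h)]
    calc ∑ i ∈ I, |μ (f i)| = μ g := hμg.symm
      _ ≤ |μ g| := le_abs_self _
      _ = ‖μ g‖ := (Real.norm_eq_abs _).symm
      _ ≤ ‖μ‖ * ‖g‖ := μ.le_opNorm g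
      _ ≤ ‖μ‖ * 1 := mul_le_mul_of_nonneg_left hgnorm (norm_nonneg μ)
      _ = ‖μ‖ := mul_one _
  have hsummable : Summable (fun i => |μ (f i)|) :=
    summable_of_sum_le (fun i => abs_nonneg _) key
  exact squeeze_zero_norm (fun n => le_of_eq (Real.norm_eq_abs _))
    hsummable.tendsto_atTop_zero

end WeakNull

section Weak
variable {K : Type*} [TopologicalSpace K] [CompactSpace K]

lemma weak_nhds_zero :
    @nhds _ (weakTopology K) 0 = ⨅ μ : C(K, ℝ) →L[ℝ] ℝ, Filter.comap μ (𝓝 (0 : ℝ)) := by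
  rw [weakTopology, _root_.nhds_iInf]
  exact iInf_congr fun μ => by rw [nhds_induced, map_zero]

lemma weak_continuous_clm (μ : C(K, ℝ) →L[ℝ] ℝ) :
    @Continuous _ _ (weakTopology K) _ μ := by
  refine continuous_iff_le_induced.mpr ?_
  rw [weakTopology]
  exact iInf_le _ μ

lemma zero_mem_weak_closure (f : ℕ → C(K, ℝ))
    (hnull : ∀ μ : C(K, ℝ) →L[ℝ] ℝ, Tendsto (fun n => μ (f n)) atTop (𝓝 0))
    (A : Set C(K, ℝ)) (hA : ∀ n m, n < m → f n + (n : ℝ) • f m ∈ A) :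
    (0 : C(K, ℝ)) ∈ @closure _ (weakTopology K) A := by
  refine (@mem_closure_iff_nhds _ (weakTopology K) _ _).mpr ?_
  intro t ht
  rw [weak_nhds_zero, Filter.mem_iInf'] at ht
  obtain ⟨I, hIfin, V, hV, hVuniv, -, htV⟩ := ht
  -- choose ε for each μ
  have hVε : ∀ μ : C(K, ℝ) →L[ℝ] ℝ, ∃ ε > 0, ∀ a : C(K, ℝ), |μ a| < ε → a ∈ V μ := by
    intro μ
    obtain ⟨s, hs, hsub⟩ := Filter.mem_comap.mp (hV μ)
    obtain ⟨ε, hε, hball⟩ := Metric.mem_nhds_iff.mp hs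
    refine ⟨ε, hε, fun a ha => hsub ?_⟩
    refine mem_preimage.mpr (hball ?_)
    rw [Metric.mem_ball, dist_zero_right, Real.norm_eq_abs]
    exact ha
  choose ε hεpos hεV using hVε
  -- eventually small for all μ ∈ I
  have hev1 : ∀ᶠ n in atTop, ∀ μ ∈ I, |μ (f n)| < ε μ / 2 := by
    rw [Filter.eventually_all_finite hIfin]
    intro μ hμ
    have hb : {z : ℝ | |z| < ε μ / 2} ∈ 𝓝 (0 : ℝ) := by
      have := Metric.ball_mem_nhds (0 : ℝ) (half_pos (hεpos μ))
      simpa [Metric.ball, dist_zero_right, Real.norm_eq_abs] using this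
    exact (hnull μ).eventually hb
  obtain ⟨n, hn⟩ := hev1.exists
  have hev2 : ∀ᶠ m in atTop, (∀ μ ∈ I, |μ (f m)| < ε μ / (2 * (n + 1))) ∧ n < m := by
    refine Filter.Eventually.and ?_ (eventually_gt_atTop n)
    rw [Filter.eventually_all_finite hIfin]
    intro μ hμ
    have hb : {z : ℝ | |z| < ε μ / (2 * (n + 1))} ∈ 𝓝 (0 : ℝ) := by
      have := Metric.ball_mem_nhds (0 : ℝ)
        (div_pos (hεpos μ) (by positivity) : (0:ℝ) < ε μ / (2 * (n + 1)))
      simpa [Metric.ball, dist_zero_right, Real.norm_eq_abs] using this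
    exact (hnull μ).eventually hb
  obtain ⟨m, hm, hnm⟩ := hev2.exists
  refine ⟨f n + (n : ℝ) • f m, ?_, hA n m hnm⟩
  -- membership in t
  have hmem : ∀ μ : C(K, ℝ) →L[ℝ] ℝ, f n + (n : ℝ) • f m ∈ V μ := by
    intro μ
    by_cases hμI : μ ∈ I
    · refine hεV μ _ ?_
      have hcalc : μ (f n + (n : ℝ) • f m) = μ (f n) + (n : ℝ) * μ (f m) := by
        rw [map_add, map_smul, smul_eq_mul]
      rw [hcalc]
      have h1 : |μ (f n)| < ε μ / 2 := hn μ hμI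
      have h2 : |μ (f m)| < ε μ / (2 * (n + 1)) := hm μ hμI
      have h3 : (n : ℝ) * |μ (f m)| ≤ ε μ / 2 := by
        have hstep : (n : ℝ) * |μ (f m)| ≤ (n : ℝ) * (ε μ / (2 * (n + 1))) :=
          mul_le_mul_of_nonneg_left h2.le (Nat.cast_nonneg n)
        refine hstep.trans ?_
        have h4 : (n : ℝ) * (ε μ / (2 * (n + 1))) = ε μ * ((n : ℝ) / (2 * ((n : ℝ) + 1))) := by
          push_cast; ring
        have h5 : (n : ℝ) / (2 * ((n : ℝ) + 1)) ≤ 1 / 2 := by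
          rw [div_le_div_iff₀ (by positivity) (by norm_num)]
          nlinarith [(Nat.cast_nonneg n : (0:ℝ) ≤ n)]
        calc (n : ℝ) * (ε μ / (2 * (n + 1)))
            = ε μ * ((n : ℝ) / (2 * ((n : ℝ) + 1))) := h4
          _ ≤ ε μ * (1 / 2) := mul_le_mul_of_nonneg_left h5 (hεpos μ).le
          _ = ε μ / 2 := by ring
      calc |μ (f n) + (n : ℝ) * μ (f m)| ≤ |μ (f n)| + |(n : ℝ) * μ (f m)| := abs_add_le _ _
        _ = |μ (f n)| + (n : ℝ) * |μ (f m)| := by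
            rw [abs_mul, Nat.abs_cast]
        _ < ε μ / 2 + ε μ / 2 := by
            have := hn μ hμI
            linarith [h3]
        _ = ε μ := by ring
    · rw [hVuniv μ hμI]; trivial
  rw [htV]
  exact mem_iInter.mpr hmem

end Weak

section Weak2
variable {K : Type*} [TopologicalSpace K] [CompactSpace K]

lemma no_weak_null_seq (f : ℕ → C(K, ℝ)) (y : ℕ → K) (O : ℕ → Set K)
    (hyO : ∀ n, y n ∈ O n)
    (hd : ∀ m n, m ≠ n → Disjoint (O m) (O n))
    (hf1 : ∀ n, f n (y n) = 1)
    (h01 : ∀ n x, 0 ≤ f n x ∧ f n x ≤ 1)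
    (hsupp : ∀ n x, x ∉ O n → f n x = 0)
    (a : ℕ → C(K, ℝ)) (p : ℕ → ℕ × ℕ)
    (hp : ∀ k, (p k).1 < (p k).2 ∧ a k = f (p k).1 + (((p k).1 : ℝ)) • f (p k).2)
    (ha : Tendsto a atTop (@nhds _ (weakTopology K) 0)) : False := by
  have hcont : ∀ μ : C(K, ℝ) →L[ℝ] ℝ, Tendsto (fun k => μ (a k)) atTop (𝓝 0) := by
    intro μ
    have h := (@Continuous.tendsto _ _ (weakTopology K) _ _ (weak_continuous_clm μ) 0).comp ha
    simpa [Function.comp_def] using h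
  -- Banach-Steinhaus: norms of a k bounded
  set J := NormedSpace.inclusionInDoubleDualLi ℝ (E := C(K, ℝ)) with hJ
  have hbdd : ∀ μ : StrongDual ℝ C(K, ℝ), ∃ C, ∀ k, ‖(J (a k)) μ‖ ≤ C := by
    intro μ
    obtain ⟨C, hC⟩ := ((hcont μ).norm).bddAbove_range
    refine ⟨C, fun k => ?_⟩
    exact hC (mem_range_self k)
  obtain ⟨C, hC⟩ := banach_steinhaus hbdd
  have hnorm : ∀ k, ‖a k‖ ≤ C := by
    intro k
    have := J.norm_map (a k)
    rw [← this]
    exact hC k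
  -- (p k).1 is bounded
  have hnk : ∀ k, (((p k).1 : ℝ)) ≤ C := by
    intro k
    obtain ⟨hlt, hak⟩ := hp k
    have heval : a k (y (p k).2) = f (p k).1 (y (p k).2) + ((p k).1 : ℝ) * f (p k).2 (y (p k).2) := by
      rw [hak]; simp
    have h2 : f (p k).2 (y (p k).2) = 1 := hf1 _
    have h3 : ((p k).1 : ℝ) ≤ a k (y (p k).2) := by
      rw [heval, h2, mul_one]
      linarith [(h01 (p k).1 (y (p k).2)).1]
    calc ((p k).1 : ℝ) ≤ a k (y (p k).2) := h3
      _ ≤ |a k (y (p k).2)| := le_abs_self _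
      _ = ‖a k (y (p k).2)‖ := (Real.norm_eq_abs _).symm
      _ ≤ ‖a k‖ := ContinuousMap.norm_coe_le_norm _ _
      _ ≤ C := hnorm k
  -- pigeonhole: some n₀ occurs infinitely often
  have hfib : ∃ n₀, {k | (p k).1 = n₀}.Infinite := by
    by_contra h
    push_neg at h
    have hcover : (Set.univ : Set ℕ) ⊆ ⋃ i ∈ Finset.range (⌈C⌉₊ + 1), {k | (p k).1 = i} := by
      intro k _
      have : (p k).1 ≤ ⌈C⌉₊ := by
        have := (hnk k).trans (Nat.le_ceil C)
        exact_mod_cast this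
      exact mem_biUnion (Finset.mem_range.mpr (Nat.lt_succ_of_le this)) rfl
    have : (Set.univ : Set ℕ).Finite :=
      Set.Finite.subset (Set.Finite.biUnion (Finset.range (⌈C⌉₊ + 1)).finite_toSet
        (fun i _ => h i)) hcover
    exact Set.infinite_univ this
  obtain ⟨n₀, hn₀⟩ := hfib
  -- evaluation functional at y n₀
  have hδ := hcont (ContinuousMap.evalCLM (R := ℝ) (M := ℝ) (y n₀))
  have hδval : ∀ k, (ContinuousMap.evalCLM (R := ℝ) (M := ℝ) (y n₀)) (a k) = a k (y n₀) := fun k => rfl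
  have hev : ∀ᶠ k in atTop, |a k (y n₀)| < 1 := by
    have hb : {z : ℝ | |z| < 1} ∈ 𝓝 (0 : ℝ) := by
      have := Metric.ball_mem_nhds (0 : ℝ) one_pos
      simpa [Metric.ball, dist_zero_right, Real.norm_eq_abs] using this
    have := hδ.eventually hb
    simpa [hδval] using this
  obtain ⟨N, hN⟩ := eventually_atTop.mp hev
  -- get k ≥ N with (p k).1 = n₀
  have : ∃ k ∈ {k | (p k).1 = n₀}, N ≤ k := by
    by_contra h
    push_neg at h
    have : {k | (p k).1 = n₀} ⊆ ↑(Finset.range N) := by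
      intro k hk
      simpa using h k hk
    exact hn₀ (Set.Finite.subset (Finset.range N).finite_toSet this)
  obtain ⟨k, hk, hkN⟩ := this
  have hkval : a k (y n₀) = 1 := by
    obtain ⟨hlt, hak⟩ := hp k
    have hn₀eq : (p k).1 = n₀ := hk
    have hm : (p k).2 ≠ n₀ := by
      intro h
      rw [← hn₀eq] at h
      omega
    have hsupp2 : f (p k).2 (y n₀) = 0 := by
      refine hsupp _ _ (fun hmem => ?_)
      exact Set.disjoint_left.mp (hd (p k).2 n₀ hm) hmem (hyO n₀)
    rw [hak]
    simp only [ContinuousMap.add_apply, ContinuousMap.coe_smul, Pi.smul_apply, smul_eq_mul]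
    rw [hsupp2, mul_zero, add_zero, hn₀eq, hf1]
  have := hN k hkN
  rw [hkval] at this
  norm_num at this

end Weak2

section Image
variable {X Y : Type*} [TopologicalSpace X] [CompactSpace X] [T2Space X]
  [TopologicalSpace Y] [T2Space Y]

lemma image_no_perfect (hX : Scattered X) (φ : X → Y) (hφ : Continuous φ)
    (D : Set Y) (hD : D ⊆ Set.range φ) (hDne : D.Nonempty)
    (hDc : IsClosed D) (hDp : Preperfect D) : False := by
  classical
  let 𝒮 : Set (Set X) := {Q | IsClosed Q ∧ φ '' Q = D}
  have hQ0 : φ ⁻¹' D ∈ 𝒮 := by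
    refine ⟨hDc.preimage hφ, ?_⟩
    apply subset_antisymm
    · rintro y ⟨x, hx, rfl⟩; exact hx
    · intro d hd
      obtain ⟨x, rfl⟩ := hD hd
      exact ⟨x, hd, rfl⟩
  have hchain : ∀ c ⊆ 𝒮, IsChain (· ⊆ ·) c → c.Nonempty →
      ∃ lb ∈ 𝒮, ∀ s ∈ c, lb ⊆ s := by
    intro c hc𝒮 hchain hcne
    refine ⟨⋂₀ c, ⟨isClosed_sInter fun Q hQ => (hc𝒮 hQ).1, ?_⟩, fun s hs => sInter_subset_of_mem hs⟩
    apply subset_antisymm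
    · obtain ⟨Q, hQ⟩ := hcne
      refine subset_trans (image_mono (f := φ) (sInter_subset_of_mem hQ)) ?_
      rw [(hc𝒮 hQ).2]
    · intro d hd
      haveI : Nonempty ↑c := hcne.to_subtype
      have hfib : (⋂ Q : ↑c, (↑Q ∩ φ ⁻¹' {d} : Set X)).Nonempty := by
        apply IsCompact.nonempty_iInter_of_directed_nonempty_isCompact_isClosed
        · rintro ⟨Q1, hQ1⟩ ⟨Q2, hQ2⟩
          rcases hchain.total hQ1 hQ2 with h | h
          · exact ⟨⟨Q1, hQ1⟩, Subset.rfl, inter_subset_inter_left _ h⟩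
          · exact ⟨⟨Q2, hQ2⟩, inter_subset_inter_left _ h, Subset.rfl⟩
        · rintro ⟨Q, hQ⟩
          have : d ∈ φ '' Q := by rw [(hc𝒮 hQ).2]; exact hd
          obtain ⟨x, hxQ, hxd⟩ := this
          exact ⟨x, hxQ, by simp [hxd]⟩
        · rintro ⟨Q, hQ⟩
          exact (((hc𝒮 hQ).1.inter (isClosed_singleton.preimage hφ)).isCompact)
        · rintro ⟨Q, hQ⟩
          exact ((hc𝒮 hQ).1.inter (isClosed_singleton.preimage hφ))
      obtain ⟨x, hx⟩ := hfib
      simp only [mem_iInter, mem_inter_iff, mem_preimage, mem_singleton_iff] at hx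
      refine ⟨x, ?_, (hx ⟨_, hcne.choose_spec⟩).2⟩
      rw [mem_sInter]
      intro Q hQ
      exact (hx ⟨Q, hQ⟩).1
  obtain ⟨Q, -, hQmin⟩ := zorn_superset_nonempty 𝒮 hchain (φ ⁻¹' D) hQ0
  obtain ⟨hQcl, hQim⟩ := hQmin.prop
  have hQne : Q.Nonempty := by
    rcases Q.eq_empty_or_nonempty with h | h
    · rw [h] at hQim; simp at hQim; exact absurd hQim.symm (Set.Nonempty.ne_empty hDne)
    · exact h
  obtain ⟨q, hqQ, U, hU, hUQ⟩ := hX Q hQne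
  have hqU : q ∈ U := by
    have : q ∈ U ∩ Q := by rw [hUQ]; rfl
    exact this.1
  have hQ'eq : Q \ {q} = Q ∩ Uᶜ := by
    ext x
    simp only [mem_diff, mem_singleton_iff, mem_inter_iff, mem_compl_iff]
    constructor
    · rintro ⟨hxQ, hxq⟩
      refine ⟨hxQ, fun hxU => hxq ?_⟩
      have : x ∈ U ∩ Q := ⟨hxU, hxQ⟩
      rw [hUQ] at this; exact this
    · rintro ⟨hxQ, hxU⟩
      exact ⟨hxQ, fun h => hxU (h ▸ hqU)⟩
  have hQ'cl : IsClosed (Q \ {q}) := by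
    rw [hQ'eq]; exact hQcl.inter hU.isClosed_compl
  have hQne' : φ '' (Q \ {q}) ≠ D := by
    intro h
    have hmem : Q \ {q} ∈ 𝒮 := ⟨hQ'cl, h⟩
    have heq : Q \ {q} = Q := hQmin.eq_of_le hmem diff_subset
    rw [← heq] at hqQ
    exact hqQ.2 rfl
  have hsub : φ '' (Q \ {q}) ⊆ D := by rw [← hQim]; exact image_mono diff_subset
  obtain ⟨d, hdD, hdZ⟩ := exists_of_ssubset (ssubset_of_subset_of_ne hsub hQne')
  -- d = φ q
  have hdq : φ q = d := by
    rw [← hQim] at hdD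
    obtain ⟨x, hxQ, hxd⟩ := hdD
    rcases eq_or_ne x q with rfl | hne
    · exact hxd
    · exact absurd ⟨x, ⟨hxQ, hne⟩, hxd⟩ hdZ
  -- Z closed
  have hZcomp : IsCompact (φ '' (Q \ {q})) := (hQ'cl.isCompact).image hφ
  have hZcl : IsClosed (φ '' (Q \ {q})) := hZcomp.isClosed
  -- D \ {d} ⊆ Z
  have hDsub : D \ {d} ⊆ φ '' (Q \ {q}) := by
    rintro y ⟨hyD, hyd⟩
    rw [← hQim] at hyD
    obtain ⟨x, hxQ, hxy⟩ := hyD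
    refine ⟨x, ⟨hxQ, fun h => ?_⟩, hxy⟩
    rw [h, hdq] at hxy
    exact hyd hxy.symm
  -- accumulation
  have hacc := preperfect_iff_nhds.mp hDp d hdD
  have hnbhd : (φ '' (Q \ {q}))ᶜ ∈ 𝓝 d := hZcl.isOpen_compl.mem_nhds hdZ
  obtain ⟨y, ⟨hyU, hyD⟩, hyd⟩ := hacc _ hnbhd
  exact hyU (hDsub ⟨hyD, hyd⟩)

lemma countable_range_of_scattered [SecondCountableTopology Y]
    (hX : Scattered X) (φ : X → Y) (hφ : Continuous φ) :
    (Set.range φ).Countable := by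
  have hcl : IsClosed (Set.range φ) := (isCompact_range hφ).isClosed
  obtain ⟨V, D, hVc, hDp, hVD⟩ := exists_countable_union_perfect_of_isClosed hcl
  rcases D.eq_empty_or_nonempty with h | h
  · rw [hVD, h, union_empty]; exact hVc
  · exact absurd (image_no_perfect hX φ hφ D
      (by rw [hVD]; exact subset_union_right) h hDp.closed hDp.acc) (fun hf => hf)

end Image

section Cp
variable {S : Type*} [TopologicalSpace S] [CompactSpace S] [T2Space S] [Nonempty S]

lemma cp_seq (hS : Scattered S) (B : Set C(S, ℝ)) (hB : B.Countable) (g : C(S, ℝ))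
    (hg : g ∈ @closure _ (pointwiseTopology S) B) :
    ∃ b : ℕ → C(S, ℝ), (∀ k, b k ∈ B) ∧
      ∀ x, Tendsto (fun k => b k x) atTop (𝓝 (g x)) := by
  classical
  have hBne : B.Nonempty := by
    rcases B.eq_empty_or_nonempty with h | h
    · rw [h, @closure_empty _ (pointwiseTopology S)] at hg
      exact absurd hg (notMem_empty g)
    · exact h
  obtain ⟨β, hβ⟩ := hB.exists_eq_range hBne
  set γ : ℕ → C(S, ℝ) := fun j => Nat.rec g (fun j' _ => β j') j with hγ
  have hγ0 : γ 0 = g := rfl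
  have hγs : ∀ j, γ (j + 1) = β j := fun j => rfl
  set t : S → (ℕ → ℝ) := fun x j => γ j x with hT
  have ht : Continuous t := continuous_pi fun j => (γ j).continuous
  have hMc : (Set.range t).Countable := countable_range_of_scattered hS t ht
  have hMne : (Set.range t).Nonempty := range_nonempty t
  obtain ⟨e, he⟩ := hMc.exists_eq_range hMne
  have hek : ∀ k, ∃ x : S, t x = e k := by
    intro k
    have : e k ∈ Set.range t := by rw [he]; exact mem_range_self k
    exact this
  choose d hd using hek
  -- unfold closure
  have hgcl : (⇑g : S → ℝ) ∈ closure ((fun φ : C(S, ℝ) => (⇑φ : S → ℝ)) '' B) := by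
    rw [pointwiseTopology] at hg
    exact closure_induced.mp hg
  -- selection
  have hsel : ∀ k : ℕ, ∃ j : ℕ, ∀ i ≤ k, |β j (d i) - g (d i)| < 1 / (k + 1) := by
    intro k
    have hc : (0 : ℝ) < 1 / (k + 1) := by positivity
    have hU : {u : S → ℝ | ∀ i ≤ k, |u (d i) - g (d i)| < 1 / (k + 1)} ∈ 𝓝 (⇑g : S → ℝ) := by
      have heq : {u : S → ℝ | ∀ i ≤ k, |u (d i) - g (d i)| < 1 / (k + 1)} =
          ⋂ i ∈ Finset.range (k + 1),
            (fun u : S → ℝ => u (d i)) ⁻¹' Metric.ball (g (d i)) (1 / (k + 1)) := by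
        ext u
        simp only [mem_setOf_eq, mem_iInter, mem_preimage, Metric.mem_ball, Real.dist_eq,
          Finset.mem_range]
        constructor
        · intro h i hi; exact h i (Nat.lt_succ_iff.mp hi)
        · intro h i hi; exact h i (Nat.lt_succ_of_le hi)
      rw [heq]
      refine (Filter.biInter_mem (Finset.range (k + 1)).finite_toSet).mpr ?_
      intro i _
      exact (continuous_apply (d i)).continuousAt.preimage_mem_nhds
        (Metric.ball_mem_nhds _ hc)
    obtain ⟨u, hu, huB⟩ := mem_closure_iff_nhds.mp hgcl _ hU
    obtain ⟨b, hbB, rfl⟩ := huB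
    rw [hβ] at hbB
    obtain ⟨j, rfl⟩ := hbB
    exact ⟨j, fun i hi => hu i hi⟩
  choose jj hjj using hsel
  refine ⟨fun k => β (jj k), fun k => by rw [hβ]; exact mem_range_self _, ?_⟩
  intro x
  have hx : ∃ i, t x = t (d i) := by
    have : t x ∈ Set.range e := by rw [← he]; exact mem_range_self x
    obtain ⟨i, hi⟩ := this
    exact ⟨i, by rw [hd i, hi]⟩
  obtain ⟨i, hi⟩ := hx
  have hcoord : ∀ j, γ j x = γ j (d i) := fun j => congrFun hi j
  have hgx : g x = g (d i) := hcoord 0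
  have hβx : ∀ j, β j x = β j (d i) := fun j => hcoord (j + 1)
  rw [Metric.tendsto_atTop]
  intro ε hε
  obtain ⟨M, hM⟩ := exists_nat_one_div_lt hε
  refine ⟨max i M, fun k hk => ?_⟩
  have hki : i ≤ k := le_trans (le_max_left i M) hk
  have hkM : M ≤ k := le_trans (le_max_right i M) hk
  have h1 : |β (jj k) (d i) - g (d i)| < 1 / (k + 1) := hjj k i hki
  have h2 : (1 : ℝ) / (k + 1) ≤ 1 / (M + 1) := by
    apply one_div_le_one_div_of_le
    · positivity
    · exact_mod_cast Nat.succ_le_succ hkM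
  rw [Real.dist_eq, hβx (jj k), hgx]
  calc |β (jj k) (d i) - g (d i)| < 1 / (k + 1) := h1
    _ ≤ 1 / (M + 1) := h2
    _ < ε := hM

end Cp


/-- Let `K` be an infinite compact Hausdorff space and `S` an infinite scattered compact
Hausdorff space. Then `C_w(K)` and `C_p(S)` are not homeomorphic. -/
theorem statement15 (K S : Type*)
    [TopologicalSpace K] [CompactSpace K] [T2Space K] [Infinite K]
    [TopologicalSpace S] [CompactSpace S] [T2Space S] [Infinite S]
    (hS : Scattered S) :
    IsEmpty (@Homeomorph C(K, ℝ) C(S, ℝ) (weakTopology K) (pointwiseTopology S)) := by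
  constructor
  intro h
  obtain ⟨f, y, O, hO, hyO, hd, hf1, h01, hsupp⟩ := exists_bumps K
  have hnull : ∀ μ : C(K, ℝ) →L[ℝ] ℝ, Tendsto (fun n => μ (f n)) atTop (𝓝 0) :=
    mu_tendsto_zero f O hd h01 hsupp
  set F : ℕ × ℕ → C(K, ℝ) := fun q => f q.1 + (q.1 : ℝ) • f q.2 with hF
  set A : Set C(K, ℝ) := F '' {q : ℕ × ℕ | q.1 < q.2} with hA
  have hAmem : ∀ n m, n < m → f n + (n : ℝ) • f m ∈ A := by
    intro n m hnm
    exact ⟨(n, m), hnm, rfl⟩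
  have hAcount : A.Countable := Set.Countable.image (Set.to_countable _) F
  have h0cl : (0 : C(K, ℝ)) ∈ @closure _ (weakTopology K) A :=
    zero_mem_weak_closure f hnull A hAmem
  have hgB : h 0 ∈ @closure _ (pointwiseTopology S) (⇑h '' A) := by
    have himg := @Homeomorph.image_closure _ _ (weakTopology K) (pointwiseTopology S) h A
    rw [← himg]
    exact mem_image_of_mem h h0cl
  obtain ⟨b, hbB, hbconv⟩ := cp_seq hS (⇑h '' A) (hAcount.image ⇑h) (h 0) hgB
  have hbp : Tendsto b atTop (@nhds _ (pointwiseTopology S) (h 0)) := by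
    show Tendsto b atTop (@nhds _ (TopologicalSpace.induced (fun f : C(S, ℝ) => (f : S → ℝ)) Pi.topologicalSpace) (h 0))
    rw [nhds_induced, tendsto_comap_iff]
    refine tendsto_pi_nhds.mpr ?_
    intro x
    exact hbconv x
  set e := @Homeomorph.symm _ _ (weakTopology K) (pointwiseTopology S) h with he
  have haseq : Tendsto (fun k => e (b k)) atTop (@nhds _ (weakTopology K) 0) := by
    have hc := @Continuous.tendsto _ _ (pointwiseTopology S) (weakTopology K) _
      (@Homeomorph.continuous _ _ (pointwiseTopology S) (weakTopology K) e) (h 0)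
    have hcomp := hc.comp hbp
    have hsy : e (h 0) = 0 :=
      @Homeomorph.symm_apply_apply _ _ (weakTopology K) (pointwiseTopology S) h 0
    rw [hsy] at hcomp
    exact hcomp
  have hpair : ∀ k, ∃ q : ℕ × ℕ, q.1 < q.2 ∧ e (b k) = F q := by
    intro k
    obtain ⟨w, hw, hwe⟩ := hbB k
    obtain ⟨q, hq, hqe⟩ := hw
    refine ⟨q, hq, ?_⟩
    have hsy : e (h w) = w :=
      @Homeomorph.symm_apply_apply _ _ (weakTopology K) (pointwiseTopology S) h w
    rw [← hwe, hsy, ← hqe]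
  choose p hp1 hp2 using hpair
  exact no_weak_null_seq f y O hyO hd hf1 h01 hsupp (fun k => e (b k)) p
    (fun k => ⟨hp1 k, hp2 k⟩) haseq
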